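/- arXiv:1611.07541 — 3 statements merged into one kernel-verified Lean document; each statement's English description precedes it below -/
import Mathlib

section
/- For any graph G with degree bound function f: V → ℕ, any partial f-factor M (a subgraph with deg_M(v) ≤ f(v) for all v), and any pair of disjoint vertex sets I, O ⊆ V, the number of edges |M| is at most f(I) + |γ(O)| + Σ_C ⌊(f(C) + |E[C,O]|)/2⌋, where γ(O) is the set of edges with both ends in O, the sum ranges over connected components C of G − I − O, f(S) denotes Σ_{v∈S} f(v), and E[C,O] is the set of edges joining C to O. -/
open scoped BigOperators symmDiff

structure Multigraph (V E : Type) where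
  fst : E → V
  snd : E → V

namespace Multigraph

variable {V E : Type}

/-- Edges with both endpoints in `S`. -/
def gamma (G : Multigraph V E) (S : Set V) : Set E :=
  {e | G.fst e ∈ S ∧ G.snd e ∈ S}

/-- Edges with exactly one endpoint in `S`. -/
def delta (G : Multigraph V E) (S : Set V) : Set E :=
  {e | Xor' (G.fst e ∈ S) (G.snd e ∈ S)}

/-- Edges with one endpoint in `A` and the other in `B`. -/
def between (G : Multigraph V E) (A B : Set V) : Set E :=
  {e | (G.fst e ∈ A ∧ G.snd e ∈ B) ∨ (G.fst e ∈ B ∧ G.snd e ∈ A)}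

/-- Degree of `v` in the sub-multigraph `M` (loops count twice). -/
noncomputable def degOn (G : Multigraph V E) (M : Set E) (v : V) : ℕ :=
  (M ∩ {e | G.fst e = v}).ncard + (M ∩ {e | G.snd e = v}).ncard

/-- A partial `f`-factor: a sub-multigraph with all degrees at most `f`. -/
def IsPartialFactor (G : Multigraph V E) (f : V → ℕ) (M : Set E) : Prop :=
  ∀ v, G.degOn M v ≤ f v

/-- `f(S) = Σ_{v∈S} f(v)`. -/
noncomputable def fSum (f : V → ℕ) (S : Set V) : ℕ := ∑ᶠ v ∈ S, f v

/-- Adjacency restricted to vertices in `W`. -/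
def adjOff (G : Multigraph V E) (W : Set V) (u v : V) : Prop :=
  u ∈ W ∧ v ∈ W ∧ ∃ e, (G.fst e = u ∧ G.snd e = v) ∨ (G.fst e = v ∧ G.snd e = u)

/-- `C` is a connected component of `G − I − O`. -/
def IsComponent (G : Multigraph V E) (I O : Set V) (C : Set V) : Prop :=
  ∃ x, x ∉ I ∪ O ∧ C = {y | Relation.ReflTransGen (G.adjOff (I ∪ O)ᶜ) x y}

end Multigraph

open Multigraph

section Aux

variable {V E : Type} [Fintype V] [Fintype E]

private lemma fiber_count (M : Set E) (g : E → V) (S : Set V) :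
    (M ∩ g ⁻¹' S).ncard = ∑ᶠ v ∈ S, (M ∩ {e | g e = v}).ncard := by
  classical
  have hS : S.Finite := Set.toFinite S
  rw [finsum_mem_eq_finite_toFinset_sum _ hS, Set.ncard_eq_toFinset_card _ (Set.toFinite _)]
  rw [Finset.card_eq_sum_card_fiberwise (f := g) (t := hS.toFinset)
    (fun e he => by
      simp only [Finset.mem_coe, Set.Finite.mem_toFinset] at he ⊢
      exact he.2)]
  refine Finset.sum_congr rfl fun v hv => ?_
  rw [Set.ncard_eq_toFinset_card _ (Set.toFinite _)]
  congr 1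
  ext e
  simp only [Finset.mem_filter, Set.Finite.mem_toFinset, Set.mem_inter_iff, Set.mem_preimage,
    Set.mem_setOf_eq] at hv ⊢
  constructor
  · rintro ⟨⟨h1, _⟩, h3⟩; exact ⟨h1, h3⟩
  · rintro ⟨h1, h2⟩; exact ⟨⟨h1, h2 ▸ hv⟩, h2⟩

private lemma deg_sum_bound (G : Multigraph V E) (f : V → ℕ) (M : Set E)
    (hM : G.IsPartialFactor f M) (S : Set V) :
    (M ∩ G.fst ⁻¹' S).ncard + (M ∩ G.snd ⁻¹' S).ncard ≤ fSum f S := by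
  have hS : S.Finite := Set.toFinite S
  rw [fiber_count, fiber_count, finsum_mem_eq_finite_toFinset_sum _ hS,
    finsum_mem_eq_finite_toFinset_sum _ hS, fSum, finsum_mem_eq_finite_toFinset_sum _ hS,
    ← Finset.sum_add_distrib]
  exact Finset.sum_le_sum fun v _ => hM v

private lemma comp_subset (G : Multigraph V E) {I O C : Set V}
    (hC : G.IsComponent I O C) : C ⊆ (I ∪ O)ᶜ := by
  obtain ⟨x, hx, rfl⟩ := hC
  intro y hy
  simp only [Set.mem_setOf_eq] at hy
  induction hy with
  | refl => exact hx
  | tail _ h _ => exact h.2.1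

private lemma C_bound (G : Multigraph V E) (f : V → ℕ) (M : Set E)
    (hM : G.IsPartialFactor f M) (O C : Set V) (hCO : Disjoint C O) :
    (M ∩ (G.gamma C ∪ G.between C O)).ncard ≤ (fSum f C + (G.between C O).ncard) / 2 := by
  rw [Nat.le_div_iff_mul_le (by norm_num)]
  set A := M ∩ G.gamma C with hA
  set B := M ∩ G.between C O with hB
  have hAB : Disjoint A B := by
    rw [Set.disjoint_left]
    rintro e ⟨_, hf, hs⟩ ⟨_, hbet⟩
    rcases hbet with ⟨h1, h2⟩ | ⟨h1, h2⟩
    · exact (hCO.ne_of_mem hs h2) rfl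
    · exact (hCO.ne_of_mem hf h1) rfl
  have hBsplit : (B ∩ G.fst ⁻¹' C).ncard + (B ∩ G.snd ⁻¹' C).ncard = B.ncard := by
    rw [← Set.ncard_union_eq]
    · congr 1
      ext e
      simp only [Set.mem_union, Set.mem_inter_iff, Set.mem_preimage, hB, between,
        Set.mem_setOf_eq]
      constructor
      · rintro (⟨h, _⟩ | ⟨h, _⟩) <;> exact h
      · rintro ⟨hm, hbet⟩
        rcases hbet with ⟨h1, h2⟩ | ⟨h1, h2⟩
        · exact Or.inl ⟨⟨hm, Or.inl ⟨h1, h2⟩⟩, h1⟩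
        · exact Or.inr ⟨⟨hm, Or.inr ⟨h1, h2⟩⟩, h2⟩
    · rw [Set.disjoint_left]
      rintro e ⟨⟨_, hbet⟩, hf⟩ ⟨_, hs⟩
      rcases hbet with ⟨_, h2⟩ | ⟨h1, _⟩
      · exact (hCO.ne_of_mem hs h2) rfl
      · exact (hCO.ne_of_mem hf h1) rfl
  have h1 : A.ncard + (B ∩ G.fst ⁻¹' C).ncard ≤ (M ∩ G.fst ⁻¹' C).ncard := by
    rw [← Set.ncard_union_eq (hAB.mono_right Set.inter_subset_left)]
    refine Set.ncard_le_ncard ?_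
    rintro e (⟨hm, hf, _⟩ | ⟨⟨hm, _⟩, hf⟩) <;> exact ⟨hm, hf⟩
  have h2 : A.ncard + (B ∩ G.snd ⁻¹' C).ncard ≤ (M ∩ G.snd ⁻¹' C).ncard := by
    rw [← Set.ncard_union_eq (hAB.mono_right Set.inter_subset_left)]
    refine Set.ncard_le_ncard ?_
    rintro e (⟨hm, _, hs⟩ | ⟨⟨hm, _⟩, hs⟩) <;> exact ⟨hm, hs⟩
  have hdeg := deg_sum_bound G f M hM C
  have hBle : B.ncard ≤ (G.between C O).ncard :=
    Set.ncard_le_ncard Set.inter_subset_right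
  have hcov : (M ∩ (G.gamma C ∪ G.between C O)).ncard ≤ A.ncard + B.ncard := by
    rw [Set.inter_union_distrib_left]
    exact Set.ncard_union_le _ _
  omega

private lemma ncard_biUnion_le' {α : Type} (s : Set α) (t : α → Set E) (hs : s.Finite) :
    (⋃ i ∈ s, t i).ncard ≤ ∑ᶠ i ∈ s, (t i).ncard := by
  refine Set.Finite.induction_on
    (motive := fun s _ => (⋃ i ∈ s, t i).ncard ≤ ∑ᶠ i ∈ s, (t i).ncard) s hs (by simp) ?_
  intro a s ha hsf ih
  rw [Set.biUnion_insert, finsum_mem_insert _ ha hsf]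
  exact le_trans (Set.ncard_union_le _ _) (by omega)

end Aux

theorem stmt0 {V E : Type} [Fintype V] [Fintype E]
    (G : Multigraph V E) (f : V → ℕ) (M : Set E) (I O : Set V)
    (hM : G.IsPartialFactor f M) (hIO : Disjoint I O) :
    M.ncard ≤ fSum f I + (G.gamma O).ncard +
      ∑ᶠ C ∈ {C : Set V | G.IsComponent I O C},
        (fSum f C + (G.between C O).ncard) / 2 := by
  classical
  set 𝒞 : Set (Set V) := {C : Set V | G.IsComponent I O C} with h𝒞
  have h𝒞fin : 𝒞.Finite := Set.toFinite _
  set MI : Set E := M ∩ (G.fst ⁻¹' I ∪ G.snd ⁻¹' I) with hMI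
  set MO : Set E := M ∩ G.gamma O with hMO
  set MC : Set V → Set E := fun C => M ∩ (G.gamma C ∪ G.between C O) with hMC
  -- cover
  have hcov : M ⊆ MI ∪ MO ∪ ⋃ C ∈ 𝒞, MC C := by
    intro e he
    by_cases hfI : G.fst e ∈ I
    · exact Or.inl (Or.inl ⟨he, Or.inl hfI⟩)
    by_cases hsI : G.snd e ∈ I
    · exact Or.inl (Or.inl ⟨he, Or.inr hsI⟩)
    by_cases hfO : G.fst e ∈ O
    · by_cases hsO : G.snd e ∈ O
      · exact Or.inl (Or.inr ⟨he, hfO, hsO⟩)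
      · -- component of snd e
        have hsW : G.snd e ∉ I ∪ O := by simp [hsI, hsO]
        refine Or.inr (Set.mem_biUnion (⟨G.snd e, hsW, rfl⟩ : G.IsComponent I O _) ?_)
        exact ⟨he, Or.inr (Or.inr ⟨hfO, Relation.ReflTransGen.refl⟩)⟩
    · have hfW : G.fst e ∉ I ∪ O := by simp [hfI, hfO]
      refine Or.inr (Set.mem_biUnion (⟨G.fst e, hfW, rfl⟩ : G.IsComponent I O _) ?_)
      by_cases hsO : G.snd e ∈ O
      · exact ⟨he, Or.inr (Or.inl ⟨Relation.ReflTransGen.refl, hsO⟩)⟩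
      · have hsW : G.snd e ∉ I ∪ O := by simp [hsI, hsO]
        refine ⟨he, Or.inl ⟨Relation.ReflTransGen.refl, ?_⟩⟩
        exact Relation.ReflTransGen.single ⟨hfW, hsW, e, Or.inl ⟨rfl, rfl⟩⟩
  have h1 : M.ncard ≤ MI.ncard + MO.ncard + (⋃ C ∈ 𝒞, MC C).ncard := by
    refine le_trans (Set.ncard_le_ncard hcov) ?_
    exact le_trans (Set.ncard_union_le _ _)
      (add_le_add_left (Set.ncard_union_le _ _) _)
  have hI : MI.ncard ≤ fSum f I := by
    refine le_trans ?_ (deg_sum_bound G f M hM I)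
    rw [hMI, Set.inter_union_distrib_left]
    exact Set.ncard_union_le _ _
  have hO : MO.ncard ≤ (G.gamma O).ncard :=
    Set.ncard_le_ncard Set.inter_subset_right
  have hC : (⋃ C ∈ 𝒞, MC C).ncard ≤
      ∑ᶠ C ∈ 𝒞, (fSum f C + (G.between C O).ncard) / 2 := by
    refine le_trans (ncard_biUnion_le' 𝒞 MC h𝒞fin) ?_
    rw [finsum_mem_eq_finite_toFinset_sum _ h𝒞fin, finsum_mem_eq_finite_toFinset_sum _ h𝒞fin]
    refine Finset.sum_le_sum fun C hCm => ?_
    have hCcomp : G.IsComponent I O C := by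
      simpa [h𝒞] using (Set.Finite.mem_toFinset h𝒞fin).mp hCm
    have hCO : Disjoint C O := by
      rw [Set.disjoint_left]
      intro a haC haO
      exact comp_subset G hCcomp haC (Or.inr haO)
    exact C_bound G f M hM O C hCO
  calc M.ncard ≤ MI.ncard + MO.ncard + (⋃ C ∈ 𝒞, MC C).ncard := h1
    _ ≤ fSum f I + (G.gamma O).ncard + ∑ᶠ C ∈ 𝒞, (fSum f C + (G.between C O).ncard) / 2 :=
      add_le_add (add_le_add hI hO) hC
end

section
/- Let M be a partial f-factor of G, I, O disjoint vertex sets, and C a connected component of G − I − O. Then 2·|E[C, C∪O] ∩ M| ≤ f(C) + |E[C,O]|, hence |E[C,C∪O] ∩ M| ≤ ⌊(f(C) + |E[C,O]|)/2⌋. -/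
open scoped BigOperators symmDiff

open Multigraph Finset

open scoped Classical

private lemma ncard_eq_filter_card {E : Type} [Fintype E] (s : Set E) :
    s.ncard = (Finset.univ.filter (· ∈ s)).card := by
  have h : s = ↑(Finset.univ.filter (· ∈ s)) := by ext e; simp
  conv_lhs => rw [h]
  rw [Set.ncard_coe_finset]


theorem stmt3 {V E : Type} [Fintype V] [Fintype E]
    (G : Multigraph V E) (f : V → ℕ) (M : Set E) (I O : Set V)
    (hM : G.IsPartialFactor f M) (hIO : Disjoint I O) (C : Set V)
    (hC : G.IsComponent I O C) :
    2 * ((G.between C (C ∪ O)) ∩ M).ncard ≤ fSum f C + (G.between C O).ncard ∧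
    ((G.between C (C ∪ O)) ∩ M).ncard ≤ (fSum f C + (G.between C O).ncard) / 2 := by
  classical
  obtain ⟨x, hx, hCeq⟩ := hC
  -- C is disjoint from O
  have hCW : C ⊆ (I ∪ O)ᶜ := by
    intro y hy
    rw [hCeq] at hy
    rcases (Relation.ReflTransGen.cases_tail hy) with rfl | ⟨b, _, hb⟩
    · exact hx
    · exact hb.2.1
  have hCO : ∀ v ∈ C, v ∉ O := fun v hv hvO => hCW hv (Or.inr hvO)
  -- Finsets
  set A : Finset E := Finset.univ.filter (fun e => e ∈ M ∧ G.fst e ∈ C) with hA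
  set B : Finset E := Finset.univ.filter (fun e => e ∈ M ∧ G.snd e ∈ C) with hB
  set X : Finset E := Finset.univ.filter (fun e => e ∈ G.between C (C ∪ O) ∩ M) with hXdef
  set Y : Finset E := Finset.univ.filter (fun e => e ∈ G.between C O) with hY
  set Y1 : Finset E := Finset.univ.filter (fun e => G.fst e ∈ C ∧ G.snd e ∈ O) with hY1
  set Y2 : Finset E := Finset.univ.filter (fun e => G.fst e ∈ O ∧ G.snd e ∈ C) with hY2
  have hX1 : X ⊆ A ∪ Y2 := by
    intro e he
    simp only [hXdef, hA, hY2, Finset.mem_filter, Finset.mem_univ, true_and,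
      Finset.mem_union, Set.mem_inter_iff] at he ⊢
    obtain ⟨hbet, heM⟩ := he
    rcases hbet with ⟨h1, _⟩ | ⟨h1, h2⟩
    · exact Or.inl ⟨heM, h1⟩
    · rcases h1 with h1 | h1
      · exact Or.inl ⟨heM, h1⟩
      · exact Or.inr ⟨h1, h2⟩
  have hX2 : X ⊆ B ∪ Y1 := by
    intro e he
    simp only [hXdef, hB, hY1, Finset.mem_filter, Finset.mem_univ, true_and,
      Finset.mem_union, Set.mem_inter_iff] at he ⊢
    obtain ⟨hbet, heM⟩ := he
    rcases hbet with ⟨h1, h2⟩ | ⟨_, h2⟩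
    · rcases h2 with h2 | h2
      · exact Or.inl ⟨heM, h2⟩
      · exact Or.inr ⟨h1, h2⟩
    · exact Or.inl ⟨heM, h2⟩
  have hYsub : Y1 ∪ Y2 ⊆ Y := by
    intro e he
    simp only [hY, hY1, hY2, Finset.mem_filter, Finset.mem_univ, true_and,
      Finset.mem_union] at he ⊢
    rcases he with h | h
    · exact Or.inl h
    · exact Or.inr h
  have hYdisj : Disjoint Y1 Y2 := by
    rw [Finset.disjoint_left]
    intro e h1 h2
    simp only [hY1, hY2, Finset.mem_filter, Finset.mem_univ, true_and] at h1 h2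
    exact hCO _ h1.1 h2.1
  -- card bound: 2|X| ≤ |A| + |B| + |Y|
  have hcard : 2 * X.card ≤ A.card + B.card + Y.card := by
    have h1 := Finset.card_le_card hX1
    have h2 := Finset.card_le_card hX2
    have h3 := Finset.card_union_le A Y2
    have h4 := Finset.card_union_le B Y1
    have h5 := Finset.card_le_card hYsub
    have h6 : (Y1 ∪ Y2).card = Y1.card + Y2.card := Finset.card_union_of_disjoint hYdisj
    omega
  -- |A| + |B| ≤ fSum f C
  have hCfin : C.Finite := Set.toFinite C
  have hfSum : fSum f C = ∑ v ∈ hCfin.toFinset, f v :=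
    finsum_mem_eq_finite_toFinset_sum f hCfin
  have hAcard : A.card = ∑ v ∈ hCfin.toFinset, (Finset.univ.filter
      (fun e => e ∈ M ∧ G.fst e = v)).card := by
    have hmap : ∀ e ∈ A, G.fst e ∈ hCfin.toFinset := by
      intro e he
      simp only [hA, Finset.mem_filter] at he
      simpa using he.2.2
    rw [Finset.card_eq_sum_card_fiberwise hmap]
    refine Finset.sum_congr rfl fun v hv => ?_
    congr 1
    ext e
    simp only [hA, Finset.mem_filter, Finset.mem_univ, true_and]
    have hvC : v ∈ C := by simpa using hv
    constructor
    · rintro ⟨⟨h1, _⟩, h3⟩; exact ⟨h1, h3⟩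
    · rintro ⟨h1, h3⟩; exact ⟨⟨h1, h3 ▸ hvC⟩, h3⟩
  have hBcard : B.card = ∑ v ∈ hCfin.toFinset, (Finset.univ.filter
      (fun e => e ∈ M ∧ G.snd e = v)).card := by
    have hmap : ∀ e ∈ B, G.snd e ∈ hCfin.toFinset := by
      intro e he
      simp only [hB, Finset.mem_filter] at he
      simpa using he.2.2
    rw [Finset.card_eq_sum_card_fiberwise hmap]
    refine Finset.sum_congr rfl fun v hv => ?_
    congr 1
    ext e
    simp only [hB, Finset.mem_filter, Finset.mem_univ, true_and]
    have hvC : v ∈ C := by simpa using hv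
    constructor
    · rintro ⟨⟨h1, _⟩, h3⟩; exact ⟨h1, h3⟩
    · rintro ⟨h1, h3⟩; exact ⟨⟨h1, h3 ▸ hvC⟩, h3⟩
  have hdeg : ∀ v : V, G.degOn M v = (Finset.univ.filter (fun e => e ∈ M ∧ G.fst e = v)).card
      + (Finset.univ.filter (fun e => e ∈ M ∧ G.snd e = v)).card := by
    intro v
    unfold Multigraph.degOn
    rw [ncard_eq_filter_card, ncard_eq_filter_card]
    congr 2 <;> · ext e; simp [Set.mem_inter_iff]
  have hAB : A.card + B.card ≤ fSum f C := by
    rw [hfSum, hAcard, hBcard, ← Finset.sum_add_distrib]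
    refine Finset.sum_le_sum fun v _ => ?_
    rw [← hdeg v]
    exact hM v
  -- convert ncards
  have hXn : (G.between C (C ∪ O) ∩ M).ncard = X.card := by
    rw [hXdef, ncard_eq_filter_card]
    congr 1
    exact Finset.filter_congr_decidable _ _ _
  have hYn : (G.between C O).ncard = Y.card := by
    rw [hY, ncard_eq_filter_card]
    try congr 1
    try exact Finset.filter_congr_decidable _ _ _
  have main : 2 * ((G.between C (C ∪ O)) ∩ M).ncard ≤ fSum f C + (G.between C O).ncard := by
    rw [hXn, hYn]; omega
  exact ⟨main, Nat.le_div_iff_mul_le (by norm_num) |>.2 (by omega)⟩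
end

section
/- Let C be a connected component of G − I − O such that exactly one vertex of C is 'free' (deg_M = f − 1) or one extra matched edge e leaves C to I, with E[C,O] ⊆ M up to the single exceptional edge e. Then 2|E[C,C∪O] ∩ M| = f(C) + |E[C,O]| − 1, and hence |E[C,C∪O] ∩ M| = ⌊(f(C)+|E[C,O]|)/2⌋. -/
open scoped BigOperators symmDiff

open Multigraph

open Classical in
private lemma fiber_sum {V E : Type} [Fintype V] [Fintype E] (C : Set V) (M : Set E)
    (g : E → V) :
    ∑ᶠ v ∈ C, (M ∩ {e | g e = v}).ncard = (M ∩ {e | g e ∈ C}).ncard := by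
  classical
  conv_lhs => rw [← Set.coe_toFinset C]
  rw [finsum_mem_coe_finset, Set.ncard_eq_toFinset_card']
  rw [Finset.card_eq_sum_card_fiberwise (f := g) (t := C.toFinset)
    (fun e he => by
      simp only [Finset.mem_coe, Set.mem_toFinset, Set.mem_inter_iff, Set.mem_setOf_eq] at he ⊢
      exact he.2)]
  refine Finset.sum_congr rfl fun v hv => ?_
  rw [Set.ncard_eq_toFinset_card']
  congr 1
  ext e
  simp only [Set.mem_toFinset, Finset.mem_filter, Set.mem_inter_iff, Set.mem_setOf_eq]
  rw [Set.mem_toFinset] at hv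
  constructor
  · rintro ⟨he, rfl⟩; exact ⟨⟨he, hv⟩, rfl⟩
  · rintro ⟨⟨he, -⟩, rfl⟩; exact ⟨he, rfl⟩


theorem stmt12 {V E : Type} [Fintype V] [Fintype E]
    (G : Multigraph V E) (f : V → ℕ) (M : Set E)
    (hM : G.IsPartialFactor f M) (I O : Set V) (hIO : Disjoint I O)
    (C : Set V) (hC : G.IsComponent I O C)
    (hcase :
      (∃ v ∈ C, G.degOn M v + 1 = f v ∧ (∀ x ∈ C, x ≠ v → G.degOn M x = f x) ∧
        G.between C I ∩ M = ∅ ∧ G.between C O ⊆ M) ∨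
      ((∀ x ∈ C, G.degOn M x = f x) ∧ (∃ e : E, G.between C I ∩ M = {e}) ∧
        G.between C O ⊆ M) ∨
      ((∀ x ∈ C, G.degOn M x = f x) ∧ G.between C I ∩ M = ∅ ∧
        ∃ e : E, G.between C O \ M = {e})) :
    2 * ((G.between C (C ∪ O)) ∩ M).ncard + 1 = fSum f C + (G.between C O).ncard ∧
    ((G.between C (C ∪ O)) ∩ M).ncard = (fSum f C + (G.between C O).ncard) / 2 := by
  classical
  obtain ⟨x, hxIO, hCdef⟩ := hC
  -- C is contained in the complement of I ∪ O
  have hCsub : ∀ y ∈ C, y ∉ I ∪ O := by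
    intro y hy
    rw [hCdef] at hy
    simp only [Set.mem_setOf_eq] at hy
    induction hy with
    | refl => exact hxIO
    | tail _ hadj _ => exact hadj.2.1
  have hclos1 : ∀ e : E, G.fst e ∈ C → G.snd e ∉ I ∪ O → G.snd e ∈ C := by
    intro e h1 h2
    have h1' := h1
    rw [hCdef] at h1 ⊢
    exact h1.tail ⟨hCsub _ h1', h2, e, Or.inl ⟨rfl, rfl⟩⟩
  have hclos2 : ∀ e : E, G.snd e ∈ C → G.fst e ∉ I ∪ O → G.fst e ∈ C := by
    intro e h1 h2
    have h1' := h1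
    rw [hCdef] at h1 ⊢
    exact h1.tail ⟨hCsub _ h1', h2, e, Or.inr ⟨rfl, rfl⟩⟩
  have hCI : ∀ z ∈ C, z ∉ I := fun z hz hzI => hCsub z hz (Or.inl hzI)
  have hCO : ∀ z ∈ C, z ∉ O := fun z hz hzO => hCsub z hz (Or.inr hzO)
  have hIO : ∀ z ∈ I, z ∉ O := fun z hz => Set.disjoint_left.mp hIO hz
  -- the target set splits
  have hbet : G.between C (C ∪ O) ∩ M = (G.gamma C ∩ M) ∪ (G.between C O ∩ M) := by
    ext e
    simp only [between, gamma, Set.mem_inter_iff, Set.mem_union, Set.mem_setOf_eq]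
    constructor
    · rintro ⟨h1 | h2, hm⟩
      · rcases h1.2 with hc | ho
        · exact Or.inl ⟨⟨h1.1, hc⟩, hm⟩
        · exact Or.inr ⟨Or.inl ⟨h1.1, ho⟩, hm⟩
      · rcases h2.1 with hc | ho
        · exact Or.inl ⟨⟨hc, h2.2⟩, hm⟩
        · exact Or.inr ⟨Or.inr ⟨ho, h2.2⟩, hm⟩
    · rintro (⟨⟨ha, hb⟩, hm⟩ | ⟨⟨ha, hb⟩ | ⟨ha, hb⟩, hm⟩)
      · exact ⟨Or.inl ⟨ha, Or.inl hb⟩, hm⟩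
      · exact ⟨Or.inl ⟨ha, Or.inr hb⟩, hm⟩
      · exact ⟨Or.inr ⟨Or.inr ha, hb⟩, hm⟩
  have hdisjγO : Disjoint (G.gamma C ∩ M) (G.between C O ∩ M) := by
    rw [Set.disjoint_left]
    rintro e ⟨⟨h1, h2⟩, -⟩ ⟨⟨ha, hb⟩ | ⟨ha, hb⟩, -⟩
    · exact hCO _ h2 hb
    · exact hCO _ h1 ha
  have hdisjIOe : Disjoint (G.between C I ∩ M) (G.between C O ∩ M) := by
    rw [Set.disjoint_left]
    rintro e ⟨⟨ha, hb⟩ | ⟨ha, hb⟩, -⟩ ⟨⟨hc, hd⟩ | ⟨hc, hd⟩, -⟩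
    · exact hIO _ hb hd
    · exact hCI _ hd hb
    · exact hCI _ hc ha
    · exact hIO _ ha hc
  -- the boundary splits
  have hδ : M ∩ G.delta C = (G.between C I ∩ M) ∪ (G.between C O ∩ M) := by
    ext e
    simp only [delta, between, Set.mem_inter_iff, Set.mem_union, Set.mem_setOf_eq, Xor']
    constructor
    · rintro ⟨hm, ⟨h1, h2⟩ | ⟨h1, h2⟩⟩
      · have : G.snd e ∈ I ∪ O := by
          by_contra h
          exact h2 (hclos1 e h1 h)
        rcases this with h | h
        · exact Or.inl ⟨Or.inl ⟨h1, h⟩, hm⟩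
        · exact Or.inr ⟨Or.inl ⟨h1, h⟩, hm⟩
      · have : G.fst e ∈ I ∪ O := by
          by_contra h
          exact h2 (hclos2 e h1 h)
        rcases this with h | h
        · exact Or.inl ⟨Or.inr ⟨h, h1⟩, hm⟩
        · exact Or.inr ⟨Or.inr ⟨h, h1⟩, hm⟩
    · rintro (⟨⟨ha, hb⟩ | ⟨ha, hb⟩, hm⟩ | ⟨⟨ha, hb⟩ | ⟨ha, hb⟩, hm⟩)
      · exact ⟨hm, Or.inl ⟨ha, fun h => hCI _ h hb⟩⟩
      · exact ⟨hm, Or.inr ⟨hb, fun h => hCI _ h ha⟩⟩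
      · exact ⟨hm, Or.inl ⟨ha, fun h => hCO _ h hb⟩⟩
      · exact ⟨hm, Or.inr ⟨hb, fun h => hCO _ h ha⟩⟩
  -- handshake lemma on C
  have hsum : ∑ᶠ v ∈ C, G.degOn M v =
      2 * (G.gamma C ∩ M).ncard +
        ((G.between C I ∩ M).ncard + (G.between C O ∩ M).ncard) := by
    have h1 : ∑ᶠ v ∈ C, G.degOn M v =
        (M ∩ {e | G.fst e ∈ C}).ncard + (M ∩ {e | G.snd e ∈ C}).ncard := by
      rw [← fiber_sum C M G.fst, ← fiber_sum C M G.snd,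
        ← finsum_mem_add_distrib (Set.toFinite C)]
      rfl
    set A := M ∩ {e | G.fst e ∈ C} with hA
    set B := M ∩ {e | G.snd e ∈ C} with hB
    have hABi : A ∩ B = G.gamma C ∩ M := by
      ext e
      simp only [hA, hB, gamma, Set.mem_inter_iff, Set.mem_setOf_eq]
      tauto
    have hABu : A ∪ B = (G.gamma C ∩ M) ∪ (M ∩ G.delta C) := by
      ext e
      simp only [hA, hB, gamma, delta, Set.mem_inter_iff, Set.mem_union,
        Set.mem_setOf_eq, Xor', Xor]
      by_cases h1 : G.fst e ∈ C <;> by_cases h2 : G.snd e ∈ C <;> tauto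
    have hdisj1 : Disjoint (G.gamma C ∩ M) (M ∩ G.delta C) := by
      rw [Set.disjoint_left]
      rintro e ⟨⟨ha, hb⟩, -⟩ ⟨-, ⟨-, h⟩ | ⟨-, h⟩⟩
      · exact h hb
      · exact h ha
    have key : A.ncard + B.ncard = (A ∪ B).ncard + (A ∩ B).ncard :=
      (Set.ncard_union_add_ncard_inter A B (Set.toFinite _) (Set.toFinite _)).symm
    rw [h1, key, hABi, hABu, Set.ncard_union_eq hdisj1 (Set.toFinite _) (Set.toFinite _),
      hδ, Set.ncard_union_eq hdisjIOe (Set.toFinite _) (Set.toFinite _)]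
    ring
  have hbetcard : (G.between C (C ∪ O) ∩ M).ncard =
      (G.gamma C ∩ M).ncard + (G.between C O ∩ M).ncard := by
    rw [hbet, Set.ncard_union_eq hdisjγO (Set.toFinite _) (Set.toFinite _)]
  -- now the case analysis
  have main : 2 * ((G.between C (C ∪ O)) ∩ M).ncard + 1 =
      fSum f C + (G.between C O).ncard := by
    rcases hcase with ⟨v, hvC, hvdeg, hother, hCIe, hCOs⟩ | ⟨hdeg, ⟨e, hCIe⟩, hCOs⟩ |
      ⟨hdeg, hCIe, e, hCOe⟩
    · -- one free vertex
      have hfs : fSum f C = ∑ᶠ x ∈ C, G.degOn M x + 1 := by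
        rw [fSum, ← Set.coe_toFinset C, finsum_mem_coe_finset, finsum_mem_coe_finset]
        have : ∀ x ∈ C.toFinset, f x = G.degOn M x + (if x = v then 1 else 0) := by
          intro x hx
          rw [Set.mem_toFinset] at hx
          by_cases h : x = v
          · subst h; simp [← hvdeg]
          · simp [h, hother x hx h]
        rw [Finset.sum_congr rfl this, Finset.sum_add_distrib,
          Finset.sum_ite_eq' C.toFinset v (fun _ => 1)]
        simp [Set.mem_toFinset.mpr hvC]
      have hI0 : (G.between C I ∩ M).ncard = 0 := by rw [hCIe]; simp
      have hOeq : G.between C O ∩ M = G.between C O := Set.inter_eq_left.mpr hCOs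
      rw [hbetcard, hfs, hsum, hI0, hOeq]
      ring
    · -- one matched edge to I
      have hfs : fSum f C = ∑ᶠ x ∈ C, G.degOn M x := by
        rw [fSum]
        exact (finsum_mem_congr rfl hdeg).symm
      have hI1 : (G.between C I ∩ M).ncard = 1 := by rw [hCIe]; simp
      have hOeq : G.between C O ∩ M = G.between C O := Set.inter_eq_left.mpr hCOs
      rw [hbetcard, hfs, hsum, hI1, hOeq]
      ring
    · -- one unmatched edge to O
      have hfs : fSum f C = ∑ᶠ x ∈ C, G.degOn M x := by
        rw [fSum]
        exact (finsum_mem_congr rfl hdeg).symm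
      have hI0 : (G.between C I ∩ M).ncard = 0 := by rw [hCIe]; simp
      have hOcard : (G.between C O).ncard = (G.between C O ∩ M).ncard + 1 := by
        rw [← Set.ncard_inter_add_ncard_diff_eq_ncard (G.between C O) M (Set.toFinite _),
          hCOe]
        simp
      rw [hbetcard, hfs, hsum, hI0, hOcard]
      ring
  exact ⟨main, by omega⟩
end
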